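/- Let E be a finite set equipped with a symmetric irreflexive 'crossing' relation. For a subset H ⊆ E let cr(H) be the number of unordered crossing pairs within H, and for ℓ ≥ 0 let e_ℓ = max{|H| : every element of H crosses at most ℓ elements of H}. If E is partitioned into k color classes H_1,…,H_k, then the total number of monochromatic crossings ∑_i cr(H_i) is at least m·|E| − k·∑_{ℓ=0}^{m-1} e_ℓ, for every natural number m. -/

import Mathlib

open Finset

theorem stmt5 {α : Type*} [LinearOrder α] (E : Finset α)
    (R : α → α → Prop) [DecidableRel R] (hsymm : Symmetric R) (hirr : Irreflexive R)
    (k : ℕ) (H : Fin k → Finset α)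
    (hdisj : ∀ i j, i ≠ j → Disjoint (H i) (H j))
    (hunion : Finset.univ.biUnion H = E)
    (m : ℕ) :
    (m : ℤ) * E.card -
        (k : ℤ) * ∑ ℓ ∈ Finset.range m,
          ((sSup {s : ℕ | ∃ G ⊆ E, (∀ x ∈ G, (G.filter (fun y => R x y)).card ≤ ℓ) ∧
              G.card = s} : ℕ) : ℤ) ≤
      ∑ i : Fin k, ((((H i) ×ˢ (H i)).filter (fun p => p.1 < p.2 ∧ R p.1 p.2)).card : ℤ) := by
  classical
  set e : ℕ → ℕ := fun ℓ => sSup {s : ℕ | ∃ G ⊆ E, (∀ x ∈ G, (G.filter (fun y => R x y)).card ≤ ℓ) ∧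
              G.card = s} with he
  have hub : ∀ ℓ : ℕ, ∀ G : Finset α, G ⊆ E →
      (∀ x ∈ G, (G.filter (fun y => R x y)).card ≤ ℓ) → G.card ≤ e ℓ := by
    intro ℓ G hGE hdeg
    apply le_csSup
    · exact ⟨E.card, fun s hs => by obtain ⟨G', hG', _, rfl⟩ := hs; exact card_le_card hG'⟩
    · exact ⟨G, hGE, hdeg, rfl⟩
  -- edge removal lemma
  have edges_erase : ∀ (G : Finset α) (x : α), x ∈ G →
      ((G ×ˢ G).filter (fun p => p.1 < p.2 ∧ R p.1 p.2)).card
        = (((G.erase x) ×ˢ (G.erase x)).filter (fun p => p.1 < p.2 ∧ R p.1 p.2)).card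
          + (G.filter (fun y => R x y)).card := by
    intro G x hx
    set T := (G ×ˢ G).filter (fun p => p.1 < p.2 ∧ R p.1 p.2) with hT
    have hsplit : (T.filter (fun p => p.1 ≠ x ∧ p.2 ≠ x)).card
        + (T.filter (fun p => ¬(p.1 ≠ x ∧ p.2 ≠ x))).card = T.card :=
      Finset.card_filter_add_card_filter_not _
    have h1 : T.filter (fun p => p.1 ≠ x ∧ p.2 ≠ x)
        = ((G.erase x) ×ˢ (G.erase x)).filter (fun p => p.1 < p.2 ∧ R p.1 p.2) := by
      ext p
      simp only [hT, mem_filter, mem_product, mem_erase]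
      tauto
    have h2 : (T.filter (fun p => ¬(p.1 ≠ x ∧ p.2 ≠ x))).card
        = (G.filter (fun y => R x y)).card := by
      apply Finset.card_bij' (fun p _ => if p.1 = x then p.2 else p.1)
        (fun y _ => if x < y then (x, y) else (y, x))
      · intro p hp
        simp only [hT, mem_filter, mem_product, not_and_or, not_ne_iff] at hp
        obtain ⟨⟨⟨h1', h2'⟩, hlt, hR⟩, hcase⟩ := hp
        rcases hcase with h | h
        · rw [if_pos h]
          exact mem_filter.mpr ⟨h2', h ▸ hR⟩
        · have hne : p.1 ≠ x := by rw [← h]; exact ne_of_lt hlt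
          rw [if_neg hne]
          exact mem_filter.mpr ⟨h1', hsymm (h ▸ hR)⟩
      · intro y hy
        obtain ⟨hyG, hRy⟩ := mem_filter.mp hy
        have hyx : y ≠ x := fun h => hirr x (h ▸ hRy)
        by_cases hlt : x < y
        · rw [if_pos hlt]
          refine mem_filter.mpr ⟨mem_filter.mpr ⟨mem_product.mpr ⟨hx, hyG⟩, hlt, hRy⟩, ?_⟩
          simp
        · have hlt' : y < x := lt_of_le_of_ne (not_lt.mp hlt) hyx
          rw [if_neg hlt]
          refine mem_filter.mpr ⟨mem_filter.mpr ⟨mem_product.mpr ⟨hyG, hx⟩, hlt', hsymm hRy⟩, ?_⟩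
          simp
      · intro p hp
        simp only [hT, mem_filter, mem_product, not_and_or, not_ne_iff] at hp
        obtain ⟨⟨⟨h1', h2'⟩, hlt, hR⟩, hcase⟩ := hp
        rcases hcase with h | h
        · rw [if_pos h, if_pos (h ▸ hlt)]
          exact Prod.ext h.symm rfl
        · have hne : p.1 ≠ x := by rw [← h]; exact ne_of_lt hlt
          have hnlt : ¬ x < p.1 := by rw [← h]; exact not_lt.mpr hlt.le
          rw [if_neg hne, if_neg hnlt]
          exact Prod.ext rfl h.symm
      · intro y hy
        obtain ⟨hyG, hRy⟩ := mem_filter.mp hy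
        have hyx : y ≠ x := fun h => hirr x (h ▸ hRy)
        by_cases hlt : x < y
        · simp [hlt, (ne_of_gt hlt)]
        · simp [hlt, hyx]
    rw [h1] at hsplit
    rw [h2] at hsplit
    omega
  -- main per-class lemma
  have key : ∀ m : ℕ, ∀ G : Finset α, G ⊆ E →
      (m : ℤ) * G.card - ∑ ℓ ∈ Finset.range m, (e ℓ : ℤ)
        ≤ ((G ×ˢ G).filter (fun p => p.1 < p.2 ∧ R p.1 p.2)).card := by
    intro m
    induction m with
    | zero => intro G _; simp
    | succ m ih =>
      intro G
      induction G using Finset.strongInduction with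
      | _ G ihG =>
        intro hGE
        by_cases hdeg : ∀ x ∈ G, (G.filter (fun y => R x y)).card ≤ m
        · -- all degrees ≤ m, so G.card ≤ e m
          have hcard : G.card ≤ e m := hub m G hGE hdeg
          have := ih G hGE
          rw [Finset.sum_range_succ]
          push_cast
          have : (m : ℤ) * G.card - ∑ ℓ ∈ Finset.range m, (e ℓ : ℤ)
              ≤ ((G ×ˢ G).filter (fun p => p.1 < p.2 ∧ R p.1 p.2)).card := ih G hGE
          have hc : (G.card : ℤ) ≤ (e m : ℤ) := by exact_mod_cast hcard
          linarith
        · push_neg at hdeg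
          obtain ⟨x, hxG, hdx⟩ := hdeg
          have hrec := edges_erase G x hxG
          have hsub : G.erase x ⊂ G := Finset.erase_ssubset hxG
          have hih := ihG (G.erase x) hsub ((Finset.erase_subset x G).trans hGE)
          have hcard : (G.erase x).card = G.card - 1 := Finset.card_erase_of_mem hxG
          have hpos : 1 ≤ G.card := Finset.card_pos.mpr ⟨x, hxG⟩
          have hcard' : ((G.erase x).card : ℤ) = (G.card : ℤ) - 1 := by
            rw [hcard]; push_cast [hpos]; ring
          rw [hrec]
          rw [hcard'] at hih
          have hdx' : (m : ℤ) + 1 ≤ (G.filter (fun y => R x y)).card := by exact_mod_cast hdx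
          push_cast
          push_cast at hih
          linarith
  -- combine
  have hHE : ∀ i, H i ⊆ E := fun i => hunion ▸ Finset.subset_biUnion_of_mem H (Finset.mem_univ i)
  have hcardE : ∑ i, (H i).card = E.card := by
    rw [← hunion, Finset.card_biUnion (fun i _ j _ hij => hdisj i j hij)]
  have hsum := Finset.sum_le_sum (fun i (_ : i ∈ (Finset.univ : Finset (Fin k))) => key m (H i) (hHE i))
  rw [Finset.sum_sub_distrib, ← Finset.mul_sum, Finset.sum_const, Finset.card_univ,
    Fintype.card_fin, nsmul_eq_mul] at hsum
  have hcE : (∑ i, ((H i).card : ℤ)) = (E.card : ℤ) := by exact_mod_cast hcardE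
  rw [hcE] at hsum
  exact hsum
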